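/- arXiv:gr-qc/9907103 — 6 statements merged into one kernel-verified Lean document; each statement's English description precedes it below -/
import Mathlib

section
/- Let a(τ) be a positive differentiable function satisfying the dust Friedmann evolution equation 2(ä/a) + (ȧ/a)² + k/a² = 0 on an interval where ȧ ≠ 0, and let g(τ) be a given continuous function. Then for any antiderivative F of g/(a·ȧ²) and any constant c, the function f(τ) = a²·ȧ·((1/2)·F(τ) + c) satisfies the linear ODE g = (k/a² − 3(ȧ/a)²)·f + 2(ȧ/a)·ḟ. -/
open Real Set

/-- For dust FLRW background `a` satisfying the Friedmann evolution
equation on an interval with `ȧ ≠ 0`, and `F` an antiderivative of `g/(a ȧ²)`,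
the function `f = a²ȧ (F/2 + c)` solves `g = (k/a² − 3(ȧ/a)²) f + 2(ȧ/a) ḟ`. -/
theorem volume_variation_ode_solution
    (k c t₁ t₂ : ℝ) (a a' a'' g F : ℝ → ℝ)
    (ha' : ∀ τ ∈ Ioo t₁ t₂, HasDerivAt a (a' τ) τ)
    (ha'' : ∀ τ ∈ Ioo t₁ t₂, HasDerivAt a' (a'' τ) τ)
    (hpos : ∀ τ ∈ Ioo t₁ t₂, 0 < a τ)
    (hne : ∀ τ ∈ Ioo t₁ t₂, a' τ ≠ 0)
    (hfried : ∀ τ ∈ Ioo t₁ t₂,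
      2 * (a'' τ / a τ) + (a' τ / a τ) ^ 2 + k / (a τ) ^ 2 = 0)
    (hg : ContinuousOn g (Ioo t₁ t₂))
    (hF : ∀ τ ∈ Ioo t₁ t₂, HasDerivAt F (g τ / (a τ * (a' τ) ^ 2)) τ) :
    ∀ τ ∈ Ioo t₁ t₂,
      g τ = (k / (a τ) ^ 2 - 3 * (a' τ / a τ) ^ 2)
              * ((a τ) ^ 2 * a' τ * (F τ / 2 + c))
            + 2 * (a' τ / a τ)
              * deriv (fun s => (a s) ^ 2 * a' s * (F s / 2 + c)) τ := by
  intro τ hτ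
  have h1 := ha' τ hτ
  have h2 := ha'' τ hτ
  have hFτ := hF τ hτ
  have haτ := (hpos τ hτ).ne'
  have hne' := hne τ hτ
  have hD : HasDerivAt (fun s => (a s) ^ 2 * a' s * (F s / 2 + c))
      ((2 * a τ * a' τ * a' τ + a τ ^ 2 * a'' τ) * (F τ / 2 + c)
        + a τ ^ 2 * a' τ * (g τ / (a τ * (a' τ) ^ 2) / 2)) τ := by
    have := ((h1.pow 2).mul h2).mul ((hFτ.div_const 2).add_const c)
    refine this.congr_deriv ?_
    simp only [Pi.pow_apply, Pi.mul_apply]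
    ring
  rw [hD.deriv]
  have hfr := hfried τ hτ
  have hfr' : 2 * a'' τ * a τ + a' τ ^ 2 + k = 0 := by
    field_simp at hfr
    linear_combination hfr
  field_simp
  linear_combination (-(a' τ) * (F τ + 2 * c)) * hfr'
end

section
/- Let a(τ) be a positive twice-differentiable function with ȧ ≠ 0 satisfying 2(ä/a) + (ȧ/a)² + k/a² = 0. Then every solution f of the homogeneous linear ODE 0 = (k/a² − 3(ȧ/a)²)·f + 2(ȧ/a)·ḟ on an interval is of the form f = c·a²·ȧ for some constant c. -/
open Real Set

/-- Every solution of the homogeneous linearized equation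
`0 = (k/a² − 3(ȧ/a)²) f + 2(ȧ/a) ḟ` about a dust FLRW background is
a constant multiple of `a²ȧ`. -/
theorem homogeneous_volume_variation_eq_mul_a_sq_a'
    (k t₁ t₂ : ℝ) (a a' a'' f f' : ℝ → ℝ)
    (ha' : ∀ τ ∈ Ioo t₁ t₂, HasDerivAt a (a' τ) τ)
    (ha'' : ∀ τ ∈ Ioo t₁ t₂, HasDerivAt a' (a'' τ) τ)
    (hpos : ∀ τ ∈ Ioo t₁ t₂, 0 < a τ)
    (hne : ∀ τ ∈ Ioo t₁ t₂, a' τ ≠ 0)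
    (hfried : ∀ τ ∈ Ioo t₁ t₂,
      2 * (a'' τ / a τ) + (a' τ / a τ) ^ 2 + k / (a τ) ^ 2 = 0)
    (hf : ∀ τ ∈ Ioo t₁ t₂, HasDerivAt f (f' τ) τ)
    (hode : ∀ τ ∈ Ioo t₁ t₂,
      0 = (k / (a τ) ^ 2 - 3 * (a' τ / a τ) ^ 2) * f τ
          + 2 * (a' τ / a τ) * f' τ) :
    ∃ c : ℝ, ∀ τ ∈ Ioo t₁ t₂, f τ = c * ((a τ) ^ 2 * a' τ) := by
  rcases isEmpty_or_nonempty (Ioo t₁ t₂) with he | ⟨⟨τ₀, hτ₀⟩⟩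
  · exact ⟨0, fun τ hτ => absurd ⟨τ, hτ⟩ (not_nonempty_iff.mpr he)⟩
  -- w = a² a'
  set w : ℝ → ℝ := fun τ => (a τ) ^ 2 * a' τ with hw
  have hwne : ∀ τ ∈ Ioo t₁ t₂, w τ ≠ 0 := fun τ hτ =>
    mul_ne_zero (pow_ne_zero _ (hpos τ hτ).ne') (hne τ hτ)
  -- derivative of w
  have hwderiv : ∀ τ ∈ Ioo t₁ t₂,
      HasDerivAt w (2 * a τ * a' τ * a' τ + (a τ)^2 * a'' τ) τ := by
    intro τ hτ
    have := (((ha' τ hτ).pow 2).mul (ha'' τ hτ))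
    convert this using 1
    rfl
    rfl
    rfl
    simp
  -- g = f / w has derivative 0
  have hg : ∀ τ ∈ Ioo t₁ t₂, HasDerivAt (fun τ => f τ / w τ) 0 τ := by
    intro τ hτ
    have hd := (hf τ hτ).div (hwderiv τ hτ) (hwne τ hτ)
    convert hd using 1
    rfl
    rfl
    rfl
    have hane := (hpos τ hτ).ne'
    have ha'ne := hne τ hτ
    have e1 : 2 * a'' τ * a τ + a' τ ^ 2 + k = 0 := by
      have h := hfried τ hτ
      field_simp at h
      have h3 : (2 * a'' τ * a τ + a' τ ^ 2 + k) * a τ ^ 3 = 0 := by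
        linear_combination a τ ^ 3 * h
      rcases mul_eq_zero.mp h3 with h4 | h4
      · exact h4
      · exact absurd h4 (pow_ne_zero _ hane)
    have e2 : (k - 3 * a' τ ^ 2) * f τ + 2 * a τ * a' τ * f' τ = 0 := by
      have h := hode τ hτ
      field_simp at h
      have h3 : ((k - 3 * a' τ ^ 2) * f τ + 2 * a τ * a' τ * f' τ) * a τ = 0 := by
        linear_combination -(a τ) * h
      rcases mul_eq_zero.mp h3 with h4 | h4
      · exact h4
      · exact absurd h4 hane
    have hnum : f' τ * w τ - f τ * (2 * a τ * a' τ * a' τ + a τ ^ 2 * a'' τ) = 0 := by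
      rw [hw]
      linear_combination (a τ / 2) * e2 - (a τ * f τ / 2) * e1
    rw [eq_comm, div_eq_zero_iff]
    left
    exact hnum
  -- constancy on convex open set
  refine ⟨f τ₀ / w τ₀, fun τ hτ => ?_⟩
  have hconst : f τ / w τ = f τ₀ / w τ₀ := by
    apply (convex_Ioo t₁ t₂).is_const_of_fderivWithin_eq_zero
      (fun x hx => ((hg x hx).differentiableAt).differentiableWithinAt)
      (fun x hx => ?_) hτ hτ₀
    rw [fderivWithin_of_isOpen isOpen_Ioo hx, (hg x hx).hasFDerivAt.fderiv]
    ext; simp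
  have : f τ = (f τ₀ / w τ₀) * w τ := by
    rw [← hconst]; field_simp [hwne τ hτ]
  simpa [hw] using this
end

section
/- For the closed case parametrized by a(η) = a₀(1 − cos η), τ − τ_c = a₀(η − sin η), the function δV = a₀²(1 − cos η)(A(η)·δE/2 + sin η·δC), where A(η) = 2(1 − cos η) − η sin η, satisfies (as a function of τ) the equation δE = (1/a² − 3(ȧ/a)²)·δV + 2(ȧ/a)·δV̇ for all constants δE, δC. -/
open Real Set

open Filter

lemma my_sub_sin_strictMono : StrictMono (fun x : ℝ => x - Real.sin x) := by
  intro x y hxy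
  simp only
  have hu0 : 0 < (y - x) / 2 := by linarith
  have habs : |Real.sin ((y - x) / 2)| < (y - x) / 2 := by
    rcases le_or_gt 0 (Real.sin ((y - x) / 2)) with h | h
    · rw [abs_of_nonneg h]; exact Real.sin_lt hu0
    · rw [abs_of_neg h]
      have hπ : π < (y - x) / 2 := by
        by_contra hle
        exact absurd (Real.sin_nonneg_of_nonneg_of_le_pi hu0.le (not_lt.1 hle)) (not_le.2 h)
      have := Real.neg_one_le_sin ((y - x) / 2)
      have := Real.pi_gt_three
      linarith
  have key : Real.sin y - Real.sin x < y - x := by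
    rw [Real.sin_sub_sin]
    calc 2 * Real.sin ((y - x) / 2) * Real.cos ((y + x) / 2)
        ≤ |2 * Real.sin ((y - x) / 2) * Real.cos ((y + x) / 2)| := le_abs_self _
      _ = 2 * |Real.sin ((y - x) / 2)| * |Real.cos ((y + x) / 2)| := by
          rw [abs_mul, abs_mul, abs_two]
      _ ≤ 2 * |Real.sin ((y - x) / 2)| * 1 := by
          have := Real.abs_cos_le_one ((y + x) / 2)
          nlinarith [abs_nonneg (Real.sin ((y - x) / 2))]
      _ < y - x := by linarith
  linarith

lemma my_phi_strictMono (a₀ τc : ℝ) (ha₀ : 0 < a₀) :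
    StrictMono (fun x : ℝ => τc + a₀ * (x - Real.sin x)) := by
  intro x y hxy
  have := my_sub_sin_strictMono hxy
  simp only at this ⊢
  nlinarith

lemma my_phi_surj (a₀ τc : ℝ) (ha₀ : 0 < a₀) :
    Function.Surjective (fun x : ℝ => τc + a₀ * (x - Real.sin x)) := by
  have hcont : Continuous (fun x : ℝ => τc + a₀ * (x - Real.sin x)) := by continuity
  apply hcont.surjective
  · apply tendsto_atTop_mono (f := fun x : ℝ => τc + a₀ * (x - 1))
    · intro x
      have := Real.sin_le_one x
      nlinarith
    · apply Filter.tendsto_atTop_add_const_left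
      apply Filter.Tendsto.const_mul_atTop ha₀
      exact tendsto_atTop_add_const_right _ _ tendsto_id
  · apply tendsto_atBot_mono (f := fun x : ℝ => τc + a₀ * (x + 1))
    · intro x
      have := Real.neg_one_le_sin x
      nlinarith
    · apply Filter.tendsto_atBot_add_const_left
      apply Filter.Tendsto.const_mul_atBot ha₀
      exact tendsto_atBot_add_const_right _ _ tendsto_id

/-- For the closed (`k = 1`) dust FLRW solution parametrized by
`a = a₀(1 − cos η)`, `τ − τ_c = a₀(η − sin η)`, the function
`δV = a₀²(1 − cos η)(A(η) δE/2 + sin η δC)` with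
`A(η) = 2(1 − cos η) − η sin η` satisfies, as a function of `τ`,
`δE = (1/a² − 3(ȧ/a)²) δV + 2(ȧ/a) δV̇` for all constants `δE, δC`. -/
theorem closed_first_variation_of_volume
    (a₀ τc t₁ t₂ δE δC : ℝ) (ha₀ : 0 < a₀) (η a V : ℝ → ℝ)
    (hrange : ∀ τ ∈ Ioo t₁ t₂, η τ ∈ Ioo 0 (2 * π))
    (hsin : ∀ τ ∈ Ioo t₁ t₂, Real.sin (η τ) ≠ 0)
    (hrel : ∀ τ ∈ Ioo t₁ t₂, τ - τc = a₀ * (η τ - Real.sin (η τ)))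
    (ha : ∀ τ ∈ Ioo t₁ t₂, a τ = a₀ * (1 - Real.cos (η τ)))
    (hV : ∀ τ ∈ Ioo t₁ t₂,
      V τ = a₀ ^ 2 * (1 - Real.cos (η τ))
        * ((2 * (1 - Real.cos (η τ)) - η τ * Real.sin (η τ)) * δE / 2
           + Real.sin (η τ) * δC)) :
    ∀ τ ∈ Ioo t₁ t₂,
      δE = (1 / (a τ) ^ 2 - 3 * (deriv a τ / a τ) ^ 2) * V τ
           + 2 * (deriv a τ / a τ) * deriv V τ := by
  intro τ₀ hτ₀
  have hs : Real.sin (η τ₀) ≠ 0 := hsin τ₀ hτ₀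
  set x₀ := η τ₀ with hx₀
  set c := Real.cos x₀ with hc
  set s := Real.sin x₀ with hsdef
  have hpy : s ^ 2 + c ^ 2 = 1 := Real.sin_sq_add_cos_sq x₀
  have h1c : (1 : ℝ) - c ≠ 0 := by
    intro h
    apply hs
    have hcc : c = 1 := by linarith
    nlinarith
  have ha₀' : a₀ ≠ 0 := ha₀.ne'
  -- the parametrization map and its inverse
  set φ : ℝ → ℝ := fun x => τc + a₀ * (x - Real.sin x) with hφdef
  have hmono := my_phi_strictMono a₀ τc ha₀
  have hsurj := my_phi_surj a₀ τc ha₀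
  set ψ : ℝ → ℝ := fun τ => (StrictMono.orderIsoOfSurjective φ hmono hsurj).symm τ with hψdef
  have hψcont : Continuous ψ := (StrictMono.orderIsoOfSurjective φ hmono hsurj).symm.continuous
  have hmem : Ioo t₁ t₂ ∈ nhds τ₀ := isOpen_Ioo.mem_nhds hτ₀
  have hφη : ∀ τ ∈ Ioo t₁ t₂, φ (η τ) = τ := by
    intro τ hτ
    have := hrel τ hτ
    simp only [hφdef]
    linarith
  have hev : ∀ᶠ τ in nhds τ₀, φ (η τ) = τ := eventually_of_mem hmem hφη
  have hηψ : η =ᶠ[nhds τ₀] ψ := by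
    filter_upwards [hev] with τ h
    have h2 : ψ (φ (η τ)) = η τ :=
      StrictMono.orderIsoOfSurjective_symm_apply_self φ hmono hsurj (η τ)
    rw [h] at h2
    exact h2.symm
  have hηcont : ContinuousAt η τ₀ := hψcont.continuousAt.congr hηψ.symm
  -- derivative of η
  set e : ℝ := (a₀ * (1 - c))⁻¹ with hedef
  have hφd : HasDerivAt φ (a₀ * (1 - c)) x₀ := by
    have := (((hasDerivAt_id x₀).sub (Real.hasDerivAt_sin x₀)).const_mul a₀).const_add τc
    exact this
  have hφne : a₀ * (1 - c) ≠ 0 := mul_ne_zero ha₀' h1c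
  have hηd : HasDerivAt η e τ₀ :=
    HasDerivAt.of_local_left_inverse hηcont hφd hφne hev
  have h1 : HasDerivAt (fun τ => 1 - Real.cos (η τ)) (s * e) τ₀ := by
    have := hηd.cos.const_sub 1
    exact this.congr_deriv (by rw [hsdef, hx₀]; ring)
  have hsind : HasDerivAt (fun τ => Real.sin (η τ)) (c * e) τ₀ := by
    have := hηd.sin
    convert this using 1
  have hNS : HasDerivAt (fun τ => η τ * Real.sin (η τ)) (e * s + x₀ * (c * e)) τ₀ :=
    hηd.mul hsind
  have hInner : HasDerivAt
      (fun τ => (2 * (1 - Real.cos (η τ)) - η τ * Real.sin (η τ)) * δE / 2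
        + Real.sin (η τ) * δC)
      ((2 * (s * e) - (e * s + x₀ * (c * e))) * δE / 2 + c * e * δC) τ₀ :=
    ((((h1.const_mul 2).sub hNS).mul_const δE).div_const 2).add (hsind.mul_const δC)
  have hF : HasDerivAt
      (fun τ => a₀ ^ 2 * (1 - Real.cos (η τ))
        * ((2 * (1 - Real.cos (η τ)) - η τ * Real.sin (η τ)) * δE / 2
           + Real.sin (η τ) * δC))
      (a₀ ^ 2 * (s * e) * ((2 * (1 - c) - x₀ * s) * δE / 2 + s * δC)
       + a₀ ^ 2 * (1 - c)
         * ((2 * (s * e) - (e * s + x₀ * (c * e))) * δE / 2 + c * e * δC)) τ₀ := by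
    have := (h1.const_mul (a₀ ^ 2)).mul hInner
    exact this
  have hVeq : V =ᶠ[nhds τ₀] _ := eventually_of_mem hmem hV
  have hderivV : deriv V τ₀ =
      a₀ ^ 2 * (s * e) * ((2 * (1 - c) - x₀ * s) * δE / 2 + s * δC)
      + a₀ ^ 2 * (1 - c)
        * ((2 * (s * e) - (e * s + x₀ * (c * e))) * δE / 2 + c * e * δC) := by
    rw [hVeq.deriv_eq]
    exact hF.deriv
  have haeq : a =ᶠ[nhds τ₀] (fun τ => a₀ * (1 - Real.cos (η τ))) := eventually_of_mem hmem ha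
  have hderiva : deriv a τ₀ = a₀ * (s * e) := by
    rw [haeq.deriv_eq]
    exact (h1.const_mul a₀).deriv
  rw [ha τ₀ hτ₀, hV τ₀ hτ₀, hderiva, hderivV, ← hx₀, ← hc, ← hsdef, hedef]
  have h1c' : (1 : ℝ) - c ≠ 0 := h1c
  have hs2 : s ^ 2 = (1 - c) * (1 + c) := by nlinarith
  have hs3 : s ^ 3 = s * ((1 - c) * (1 + c)) := by
    rw [pow_succ, hs2]; ring
  have hs4 : s ^ 4 = ((1 - c) * (1 + c)) ^ 2 := by
    rw [show (4 : ℕ) = 2 * 2 from rfl, pow_mul, hs2]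
  have hs5 : s ^ 5 = s * ((1 - c) * (1 + c)) ^ 2 := by
    rw [pow_succ, hs4]; ring
  have hs6 : s ^ 6 = ((1 - c) * (1 + c)) ^ 3 := by
    rw [show (6 : ℕ) = 2 * 3 from rfl, pow_mul, hs2]
  field_simp
  ring_nf
  simp only [hs6, hs5, hs4, hs3, hs2]
  ring
end

section
/- For the open case parametrized by a(η) = a₀(cosh η − 1), τ − τ_c = a₀(sinh η − η), η > 0, the function δV = a₀²(cosh η − 1)(A₋(η)·δE/2 + sinh η·δC), where A₋(η) = η sinh η − 2(cosh η − 1), satisfies (as a function of τ) δE = (−1/a² − 3(ȧ/a)²)·δV + 2(ȧ/a)·δV̇ for all constants δE, δC. -/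
open Real Set Filter Topology
set_option maxHeartbeats 2000000

/-- For the open (`k = −1`) dust FLRW solution parametrized by
`a = a₀(cosh η − 1)`, `τ − τ_c = a₀(sinh η − η)`, `η > 0`, the function
`δV = a₀²(cosh η − 1)(A₋(η) δE/2 + sinh η δC)` with
`A₋(η) = η sinh η − 2(cosh η − 1)` satisfies, as a function of `τ`,
`δE = (−1/a² − 3(ȧ/a)²) δV + 2(ȧ/a) δV̇` for all constants `δE, δC`. -/
theorem open_first_variation_of_volume
    (a₀ τc t₁ t₂ δE δC : ℝ) (ha₀ : 0 < a₀) (η a V : ℝ → ℝ)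
    (hrange : ∀ τ ∈ Ioo t₁ t₂, 0 < η τ)
    (hrel : ∀ τ ∈ Ioo t₁ t₂, τ - τc = a₀ * (Real.sinh (η τ) - η τ))
    (ha : ∀ τ ∈ Ioo t₁ t₂, a τ = a₀ * (Real.cosh (η τ) - 1))
    (hV : ∀ τ ∈ Ioo t₁ t₂,
      V τ = a₀ ^ 2 * (Real.cosh (η τ) - 1)
        * ((η τ * Real.sinh (η τ) - 2 * (Real.cosh (η τ) - 1)) * δE / 2
           + Real.sinh (η τ) * δC)) :
    ∀ τ ∈ Ioo t₁ t₂,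
      δE = (-1 / (a τ) ^ 2 - 3 * (deriv a τ / a τ) ^ 2) * V τ
           + 2 * (deriv a τ / a τ) * deriv V τ := by
  
  intro τ hτ
  set F : ℝ → ℝ := fun x => a₀ * (Real.sinh x - x) with hF
  have hFmono : StrictMono F := fun x y hxy => by
    have h1 := Real.sinh_sub_id_strictMono hxy
    simp only at h1
    simp only [hF]
    nlinarith [ha₀]
  set h := η τ with hh
  have hhpos : 0 < h := hrange τ hτ
  have hc1 : (1:ℝ) < Real.cosh h := Real.one_lt_cosh.mpr (ne_of_gt hhpos)
  set c := Real.cosh h with hc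
  set s := Real.sinh h with hs
  have hcne : c - 1 ≠ 0 := by simp only [hc]; nlinarith
  have ha₀ne : a₀ ≠ 0 := ne_of_gt ha₀
  have hane : a₀ * (c - 1) ≠ 0 := mul_ne_zero ha₀ne hcne
  have hFd : HasStrictDerivAt F (a₀ * (c - 1)) h := by
    have h1 : HasStrictDerivAt (fun x => Real.sinh x - x) (c - 1) h :=
      (Real.hasStrictDerivAt_sinh h).sub (hasStrictDerivAt_id h)
    simpa [hF] using h1.const_mul a₀
  have hFτ : F h = τ - τc := (hrel τ hτ).symm
  have hginv : ∀ᶠ x in 𝓝 h, η (F x + τc) = x := by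
    have hcont : ContinuousAt (fun x => F x + τc) h := by fun_prop
    have hmem : ∀ᶠ x in 𝓝 h, F x + τc ∈ Ioo t₁ t₂ := by
      apply hcont.eventually_mem
      rw [show F h + τc = τ by rw [hFτ]; ring]
      exact isOpen_Ioo.mem_nhds hτ
    filter_upwards [hmem] with x hx
    have h1 := hrel (F x + τc) hx
    have h2 : F (η (F x + τc)) = F x := by simp only [hF] at h1 ⊢; linarith
    exact hFmono.injective h2
  have hgd : HasStrictDerivAt (fun y => η (y + τc)) (a₀ * (c - 1))⁻¹ (τ - τc) := by
    have := hFd.to_local_left_inverse hane (g := fun y => η (y + τc)) hginv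
    rwa [hFτ] at this
  set η' : ℝ := (a₀ * (c - 1))⁻¹ with hη'
  have hηd : HasDerivAt η η' τ := by
    have hsub : HasDerivAt (fun τ' : ℝ => τ' - τc) 1 τ :=
      (hasDerivAt_id τ).sub_const τc
    have h1 := (hgd.hasDerivAt.comp τ hsub)
    have h2 : ((fun y => η (y + τc)) ∘ fun τ' => τ' - τc) = η := by
      funext x; simp
    rw [h2] at h1
    simpa using h1
  have hcoshD : HasDerivAt (fun τ' => Real.cosh (η τ')) (s * η') τ :=
    (Real.hasDerivAt_cosh h).comp τ hηd
  have hsinhD : HasDerivAt (fun τ' => Real.sinh (η τ')) (c * η') τ :=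
    (Real.hasDerivAt_sinh h).comp τ hηd
  -- derivative of a
  have haev : a =ᶠ[𝓝 τ] fun τ' => a₀ * (Real.cosh (η τ') - 1) := by
    filter_upwards [isOpen_Ioo.mem_nhds hτ] with x hx using ha x hx
  have haD : HasDerivAt (fun τ' => a₀ * (Real.cosh (η τ') - 1)) (a₀ * (s * η')) τ := by
    simpa using (hcoshD.sub_const 1).const_mul a₀
  have hderiva : deriv a τ = a₀ * (s * η') := by
    rw [haev.deriv_eq]; exact haD.deriv
  -- derivative of V
  have hVev : V =ᶠ[𝓝 τ] fun τ' => a₀ ^ 2 * (Real.cosh (η τ') - 1)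
        * ((η τ' * Real.sinh (η τ') - 2 * (Real.cosh (η τ') - 1)) * δE / 2
           + Real.sinh (η τ') * δC) := by
    filter_upwards [isOpen_Ioo.mem_nhds hτ] with x hx using hV x hx
  set P : ℝ := (h * s - 2 * (c - 1)) * δE / 2 + s * δC with hP
  set Qd : ℝ := (η' * s + h * (c * η') - 2 * (s * η')) * δE / 2 + (c * η') * δC with hQd
  have hVD : HasDerivAt (fun τ' => a₀ ^ 2 * (Real.cosh (η τ') - 1)
        * ((η τ' * Real.sinh (η τ') - 2 * (Real.cosh (η τ') - 1)) * δE / 2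
           + Real.sinh (η τ') * δC))
      (a₀ ^ 2 * ((s * η') * P + (c - 1) * Qd)) τ := by
    have h1 : HasDerivAt (fun τ' => a₀ ^ 2 * (Real.cosh (η τ') - 1)) (a₀ ^ 2 * (s * η')) τ := by
      simpa using (hcoshD.sub_const 1).const_mul (a₀ ^ 2)
    have h2 : HasDerivAt (fun τ' => η τ' * Real.sinh (η τ')) (η' * s + h * (c * η')) τ :=
      hηd.mul hsinhD
    have ha' : HasDerivAt (fun τ' => η τ' * Real.sinh (η τ') - 2 * (Real.cosh (η τ') - 1))
        (η' * s + h * (c * η') - 2 * (s * η')) τ := by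
      exact h2.sub (((hcoshD.sub_const 1)).const_mul 2)
    have h3 : HasDerivAt (fun τ' => (η τ' * Real.sinh (η τ') - 2 * (Real.cosh (η τ') - 1)) * δE / 2
           + Real.sinh (η τ') * δC) Qd τ :=
      ((ha'.mul_const δE).div_const 2).add (hsinhD.mul_const δC)
    have h4 := h1.mul h3
    convert h4 using 1
    · rfl
    · rfl
    · rfl
    simp only [hP]
    ring
  have hderivV : deriv V τ = a₀ ^ 2 * ((s * η') * P + (c - 1) * Qd) := by
    rw [hVev.deriv_eq]; exact hVD.deriv
  -- algebra
  have hsq : c ^ 2 = s ^ 2 + 1 := by rw [hc, hs]; exact Real.cosh_sq h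
  rw [hderiva, hderivV, ha τ hτ, hV τ hτ]
  simp only [← hh, ← hc, ← hs, ← hP]
  symm
  trans (δE + (h * s * δE / 2 + s * δC) * (c ^ 2 - (s ^ 2 + 1)) / (c - 1) ^ 3)
  · simp only [hP, hQd, hη']
    field_simp
    ring
  · rw [hsq]; ring
end

section
/- Let a(τ) > 0 satisfy the Friedmann equation 2(ä/a) + (ȧ/a)² + k/a² = 0 with ȧ ≠ 0, and let Γ(τ) be continuous. Then f(τ) = a²ȧ·(δ²E/2 · F₁(τ) + c) − (a²ȧ/2)·F₂(τ), where F₁ is an antiderivative of 1/(a ȧ²) and F₂ is an antiderivative of Γ/(a ȧ²), satisfies δ²E = (k/a² − 3(ȧ/a)²)·f + 2(ȧ/a)·ḟ + Γ(τ). -/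
open Real Set

/-- Second-variation equation: with `F₁` an antiderivative of
`1/(a ȧ²)` and `F₂` an antiderivative of `Γ/(a ȧ²)`, the function
`f = a²ȧ (δ2E/2 · F₁ + c) − (a²ȧ/2) F₂` satisfies
`δ2E = (k/a² − 3(ȧ/a)²) f + 2(ȧ/a) ḟ + Γ`. -/
theorem second_variation_ode_solution
    (k c δ2E t₁ t₂ : ℝ) (a a' a'' Γ F₁ F₂ : ℝ → ℝ)
    (ha' : ∀ τ ∈ Ioo t₁ t₂, HasDerivAt a (a' τ) τ)
    (ha'' : ∀ τ ∈ Ioo t₁ t₂, HasDerivAt a' (a'' τ) τ)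
    (hpos : ∀ τ ∈ Ioo t₁ t₂, 0 < a τ)
    (hne : ∀ τ ∈ Ioo t₁ t₂, a' τ ≠ 0)
    (hfried : ∀ τ ∈ Ioo t₁ t₂,
      2 * (a'' τ / a τ) + (a' τ / a τ) ^ 2 + k / (a τ) ^ 2 = 0)
    (hΓ : ContinuousOn Γ (Ioo t₁ t₂))
    (hF₁ : ∀ τ ∈ Ioo t₁ t₂, HasDerivAt F₁ (1 / (a τ * (a' τ) ^ 2)) τ)
    (hF₂ : ∀ τ ∈ Ioo t₁ t₂, HasDerivAt F₂ (Γ τ / (a τ * (a' τ) ^ 2)) τ) :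
    ∀ τ ∈ Ioo t₁ t₂,
      δ2E = (k / (a τ) ^ 2 - 3 * (a' τ / a τ) ^ 2)
              * ((a τ) ^ 2 * a' τ * (δ2E / 2 * F₁ τ + c)
                  - (a τ) ^ 2 * a' τ / 2 * F₂ τ)
            + 2 * (a' τ / a τ)
              * deriv (fun s => (a s) ^ 2 * a' s * (δ2E / 2 * F₁ s + c)
                  - (a s) ^ 2 * a' s / 2 * F₂ s) τ
            + Γ τ := by
  intro τ hτ
  have hA := hpos τ hτ
  have hA0 : a τ ≠ 0 := ne_of_gt hA
  have hA' := hne τ hτ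
  -- derivative of a² a'
  have hg : HasDerivAt (fun s => (a s) ^ 2 * a' s)
      (2 * a τ * a' τ * a' τ + (a τ) ^ 2 * a'' τ) τ := by
    have h1 : HasDerivAt (fun s => (a s) ^ 2) (2 * a τ * a' τ) τ := by
      simpa [mul_comm] using ((ha' τ hτ).fun_pow 2)
    simpa using h1.fun_mul (ha'' τ hτ)
  have hf : HasDerivAt (fun s => (a s) ^ 2 * a' s * (δ2E / 2 * F₁ s + c)
      - (a s) ^ 2 * a' s / 2 * F₂ s)
      ((2 * a τ * a' τ * a' τ + (a τ) ^ 2 * a'' τ) * (δ2E / 2 * F₁ τ + c)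
        + (a τ) ^ 2 * a' τ * (δ2E / 2 * (1 / (a τ * (a' τ) ^ 2)))
        - ((2 * a τ * a' τ * a' τ + (a τ) ^ 2 * a'' τ) / 2 * F₂ τ
        + (a τ) ^ 2 * a' τ / 2 * (Γ τ / (a τ * (a' τ) ^ 2)))) τ := by
    have h1 : HasDerivAt (fun s => δ2E / 2 * F₁ s + c)
        (δ2E / 2 * (1 / (a τ * (a' τ) ^ 2))) τ := by
      simpa using (((hF₁ τ hτ).const_mul (δ2E / 2)).add_const c)
    have h2 := hg.mul h1
    have h3 : HasDerivAt (fun s => (a s) ^ 2 * a' s / 2)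
        ((2 * a τ * a' τ * a' τ + (a τ) ^ 2 * a'' τ) / 2) τ := hg.div_const 2
    have h4 := h3.mul (hF₂ τ hτ)
    exact h2.sub h4
  rw [hf.deriv]
  have hfr := hfried τ hτ
  have key : a'' τ = -(a' τ ^ 2 / (2 * a τ) + k / (2 * a τ)) := by
    field_simp at hfr ⊢
    have h5 : (a τ) ^ 3 * (2 * a'' τ * a τ + a' τ ^ 2 + k) = 0 := by
      linear_combination (a τ) ^ 3 * hfr
    rcases mul_eq_zero.1 h5 with h | h
    · exact absurd h (pow_ne_zero 3 hA0)
    · linarith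
  rw [key]
  field_simp
  ring
end

section
/- Suppose f : ℝ → ℝ satisfies δE = (−3(ȧ/a)²)f + 2(ȧ/a)ḟ with a(τ) = a₀(τ−τ_c)^{2/3} on (τ_c, ∞), where δE is a constant. If additionally f(τ)/(τ−τ_c)² → 0 as τ → ∞ and f(τ)/(τ−τ_c) → 0 as τ → τ_c⁺, then δE = 0 and f ≡ 0. -/
open Real Set Filter

/-- If `f` solves `δE = (−3(ȧ/a)²) f + 2(ȧ/a) ḟ` on `(τ_c, ∞)`
with `a = a₀(τ−τ_c)^(2/3)`, and `f/(τ−τ_c)² → 0` at `∞` and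
`f/(τ−τ_c) → 0` as `τ → τ_c⁺`, then `δE = 0` and `f ≡ 0`. -/
theorem flat_critical_point
    (a₀ τc δE : ℝ) (ha₀ : 0 < a₀) (f f' : ℝ → ℝ)
    (hf : ∀ τ ∈ Ioi τc, HasDerivAt f (f' τ) τ)
    (hode : ∀ τ ∈ Ioi τc,
      δE = (-3 * (deriv (fun s => a₀ * (s - τc) ^ ((2 : ℝ) / 3)) τ
              / (a₀ * (τ - τc) ^ ((2 : ℝ) / 3))) ^ 2) * f τ
            + 2 * (deriv (fun s => a₀ * (s - τc) ^ ((2 : ℝ) / 3)) τ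
              / (a₀ * (τ - τc) ^ ((2 : ℝ) / 3))) * f' τ)
    (hlim_top : Tendsto (fun τ => f τ / (τ - τc) ^ 2) atTop (nhds 0))
    (hlim_bot : Tendsto (fun τ => f τ / (τ - τc)) (nhdsWithin τc (Ioi τc))
      (nhds 0)) :
    δE = 0 ∧ ∀ τ ∈ Ioi τc, f τ = 0 := by
  -- Step 1: the Hubble ratio simplifies to 2/(3(τ-τc))
  have hratio : ∀ τ ∈ Ioi τc,
      deriv (fun s => a₀ * (s - τc) ^ ((2 : ℝ) / 3)) τ
        / (a₀ * (τ - τc) ^ ((2 : ℝ) / 3)) = 2 / (3 * (τ - τc)) := by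
    intro τ hτ
    have hpos : (0:ℝ) < τ - τc := sub_pos.mpr hτ
    have hda : HasDerivAt (fun s => a₀ * (s - τc) ^ ((2 : ℝ) / 3))
        (a₀ * (((2:ℝ)/3) * (τ - τc) ^ ((2:ℝ)/3 - 1))) τ := by
      have h1 : HasDerivAt (fun s : ℝ => s - τc) 1 τ :=
        (hasDerivAt_id τ).sub_const τc
      have h2 := (h1.rpow_const (p := (2:ℝ)/3) (Or.inl hpos.ne'))
      simpa [mul_comm, mul_assoc, mul_left_comm] using h2.const_mul a₀
    rw [hda.deriv]
    have key : (τ-τc)^((2:ℝ)/3-1) = (τ-τc)^((2:ℝ)/3) * (τ-τc)⁻¹ := by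
      rw [← Real.rpow_neg_one (τ-τc), ← Real.rpow_add hpos]; norm_num
    rw [key]
    have hne : (τ-τc)^((2:ℝ)/3) ≠ 0 := by positivity
    field_simp
  -- Step 2: the ODE in explicit form
  have hf'eq : ∀ τ ∈ Ioi τc,
      f' τ = (3/4) * δE * (τ - τc) + f τ / (τ - τc) := by
    intro τ hτ
    have hpos : (0:ℝ) < τ - τc := sub_pos.mpr hτ
    have h := hode τ hτ
    rw [hratio τ hτ] at h
    field_simp at h ⊢
    have h2 : (9*(τ - τc)) * (f' τ * (4 * (τ - τc))
        - (3 * δE * (τ - τc) * (τ - τc) + f τ * 4)) = 0 := by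
      linear_combination (-9 * (τ - τc)) * h
    rcases mul_eq_zero.mp h2 with h3 | h3
    · exact absurd h3 (by positivity)
    · linarith
  -- Step 3: g := f/(τ-τc) - (3/4)δE(τ-τc) has zero derivative on Ioi τc
  set g : ℝ → ℝ := fun τ => f τ / (τ - τc) - (3/4) * δE * (τ - τc) with hg
  have hgd : ∀ τ ∈ Ioi τc, HasDerivAt g 0 τ := by
    intro τ hτ
    have hpos : (0:ℝ) < τ - τc := sub_pos.mpr hτ
    have h1 : HasDerivAt (fun s : ℝ => s - τc) 1 τ :=
      (hasDerivAt_id τ).sub_const τc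
    have h2 : HasDerivAt (fun s => f s / (s - τc))
        ((f' τ * (τ - τc) - f τ * 1) / (τ - τc) ^ 2) τ :=
      (hf τ hτ).div h1 hpos.ne'
    have h3 : HasDerivAt (fun s : ℝ => (3/4) * δE * (s - τc))
        ((3/4) * δE) τ := by
      simpa using h1.const_mul ((3:ℝ)/4 * δE)
    have h4 := h2.sub h3
    have heq : (f' τ * (τ - τc) - f τ * 1) / (τ - τc) ^ 2 - (3/4) * δE = 0 := by
      rw [hf'eq τ hτ]
      field_simp
      ring
    rw [heq] at h4
    exact h4
  -- Step 4: g is constant on Ioi τc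
  have hgc : ∀ τ ∈ Ioi τc, g τ = g (τc + 1) := by
    have pair : ∀ x ∈ Ioi τc, ∀ y ∈ Ioi τc, x ≤ y → g y = g x := by
      intro x hx y hy hxy
      have hsub : Icc x y ⊆ Ioi τc := fun t ht => lt_of_lt_of_le hx ht.1
      have hcont : ContinuousOn g (Icc x y) := fun t ht =>
        ((hgd t (hsub ht)).continuousAt).continuousWithinAt
      have hderiv : ∀ t ∈ Ico x y, HasDerivWithinAt g 0 (Ici t) t :=
        fun t ht => (hgd t (hsub ⟨ht.1, ht.2.le⟩)).hasDerivWithinAt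
      exact constant_of_has_deriv_right_zero hcont hderiv y ⟨hxy, le_rfl⟩
    intro τ hτ
    have h1 : τc + 1 ∈ Ioi τc := by simp
    rcases le_total τ (τc + 1) with h | h
    · exact (pair τ hτ (τc + 1) h1 h).symm
    · exact pair (τc + 1) h1 τ hτ h
  set C : ℝ := g (τc + 1) with hC
  -- Step 5: use limit at infinity to get δE = 0
  have htop : Tendsto (fun τ => f τ / (τ - τc) ^ 2) atTop
      (nhds ((3/4) * δE)) := by
    have hev : ∀ᶠ τ in atTop, C / (τ - τc) + (3/4) * δE
        = f τ / (τ - τc) ^ 2 := by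
      filter_upwards [eventually_gt_atTop τc] with τ hτ
      have hpos : (0:ℝ) < τ - τc := sub_pos.mpr hτ
      have h1 := hgc τ hτ
      rw [hg] at h1
      simp only at h1
      have h2 : f τ / (τ - τc) = C + (3/4) * δE * (τ - τc) := by linarith
      rw [sq, ← div_div, h2, add_div, mul_div_assoc, div_self hpos.ne', mul_one]
    have hlim1 : Tendsto (fun τ : ℝ => C / (τ - τc) + (3/4) * δE) atTop
        (nhds (0 + (3/4) * δE)) := by
      refine Tendsto.add ?_ tendsto_const_nhds
      exact Tendsto.div_atTop tendsto_const_nhds (tendsto_atTop_add_const_right _ _ tendsto_id)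
    rw [zero_add] at hlim1
    exact hlim1.congr' hev
  have hδE : δE = 0 := by
    have := tendsto_nhds_unique hlim_top htop
    linarith
  -- Step 6: use limit at τc⁺ to get C = 0
  have hCe : ∀ τ ∈ Ioi τc, f τ / (τ - τc) = C := by
    intro τ hτ
    have h1 := hgc τ hτ
    rw [hg] at h1
    simp only at h1
    rw [hδE] at h1
    linarith
  have hbot : Tendsto (fun τ => f τ / (τ - τc)) (nhdsWithin τc (Ioi τc))
      (nhds C) := by
    refine Tendsto.congr' ?_ (tendsto_const_nhds (α := ℝ))
    filter_upwards [self_mem_nhdsWithin] with τ hτ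
    exact (hCe τ hτ).symm
  have hC0 : C = 0 := by
    have := tendsto_nhds_unique hbot hlim_bot
    linarith
  refine ⟨hδE, fun τ hτ => ?_⟩
  have hpos : (0:ℝ) < τ - τc := sub_pos.mpr hτ
  have := hCe τ hτ
  rw [hC0] at this
  exact (div_eq_zero_iff.mp this).resolve_right hpos.ne'
end
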